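/- Let Φ_n : P_n → P_n be defined by Φ_n(α) := ∇(π_n α π_n^{−1}), where π_n := σ_1 ⋯ σ_{n−1}. Then the kernel of Φ_n equals P_n^n, the subgroup of P_n generated by A_{1n}, A_{2n}, …, A_{n−1,n}. Consequently the set W_n^1 of braids woven of type (n) equals the coset π_n ker(Φ_n). -/

import Mathlib

/-! Basic setup: the braid group `B_n` as a presented group.  Generators are
indexed by `ℕ`; the generator with index `i` represents `σ_i` for
`1 ≤ i ≤ n-1`, and all generators with index `0` or `≥ n` are trivialized. -/

/-- The relators of the braid group `B_n`. -/
def braidRels (n : ℕ) : Set (FreeGroup ℕ) :=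
  { r | (∃ i, 1 ≤ i ∧ i + 2 ≤ n ∧
          r = .of i * .of (i+1) * .of i * (.of (i+1) * .of i * .of (i+1))⁻¹) ∨
        (∃ i j, 1 ≤ i ∧ i + 2 ≤ j ∧ j + 1 ≤ n ∧
          r = .of i * .of j * (.of j * .of i)⁻¹) ∨
        (∃ i, (i = 0 ∨ n ≤ i) ∧ r = .of i) }

/-- The braid group on `n` strings. -/
abbrev BraidGroup (n : ℕ) := PresentedGroup (braidRels n)

/-- The standard generator `σ_i` of `B_n` (nontrivial for `1 ≤ i ≤ n-1`). -/
def σ (n i : ℕ) : BraidGroup n := PresentedGroup.of i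

/-- The transposition `(i, i+1)` of the strings `{1, …, n}`, as a permutation of `ℕ`. -/
def permOfGen (n i : ℕ) : Equiv.Perm ℕ :=
  if 1 ≤ i ∧ i + 1 ≤ n then Equiv.swap i (i+1) else 1

theorem braidRels_lift (n : ℕ) :
    ∀ r ∈ braidRels n, FreeGroup.lift (permOfGen n) r = 1 := by
  rintro r (⟨i, h1, h2, rfl⟩ | ⟨i, j, h1, h2, h3, rfl⟩ | ⟨i, hi, rfl⟩)
  · have e1 : permOfGen n i = Equiv.swap i (i+1) := if_pos ⟨h1, by omega⟩
    have e2 : permOfGen n (i+1) = Equiv.swap (i+1) (i+2) := if_pos ⟨by omega, by omega⟩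
    simp only [map_mul, map_inv, FreeGroup.lift_apply_of, e1, e2]
    rw [mul_inv_eq_one]
    have l : Equiv.swap i (i+1) * Equiv.swap (i+1) (i+2) * Equiv.swap i (i+1)
        = Equiv.swap i (i+2) := by
      have h := Equiv.swap_mul_swap_mul_swap
        (x := i+2) (y := i+1) (z := i) (by omega) (by omega)
      rwa [Equiv.swap_comm (i+1) i, Equiv.swap_comm (i+2) (i+1)] at h
    have r : Equiv.swap (i+1) (i+2) * Equiv.swap i (i+1) * Equiv.swap (i+1) (i+2)
        = Equiv.swap i (i+2) := by
      have h := Equiv.swap_mul_swap_mul_swap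
        (x := i) (y := i+1) (z := i+2) (by omega) (by omega)
      rwa [Equiv.swap_comm (i+2) i] at h
    rw [l, r]
  · have e1 : permOfGen n i = Equiv.swap i (i+1) := if_pos ⟨h1, by omega⟩
    have e2 : permOfGen n j = Equiv.swap j (j+1) := if_pos ⟨by omega, by omega⟩
    simp only [map_mul, map_inv, FreeGroup.lift_apply_of, e1, e2]
    rw [mul_inv_eq_one]
    have hd : (Equiv.swap i (i+1)).Disjoint (Equiv.swap j (j+1)) := by
      intro x
      rcases eq_or_ne x i with rfl | hxi
      · right; exact Equiv.swap_apply_of_ne_of_ne (by omega) (by omega)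
      rcases eq_or_ne x (i+1) with rfl | hxi1
      · right; exact Equiv.swap_apply_of_ne_of_ne (by omega) (by omega)
      · left; exact Equiv.swap_apply_of_ne_of_ne hxi hxi1
    exact hd.commute
  · have h : permOfGen n i = 1 := if_neg (by omega)
    simp [h]

/-- The canonical projection `Π : B_n → S_n`, sending `σ_i` to the
transposition `(i, i+1)` (strings are `1, …, n`, permutations of `ℕ`
fixing everything else). -/
def braidPerm (n : ℕ) : BraidGroup n →* Equiv.Perm ℕ :=
  PresentedGroup.toGroup (braidRels_lift n)

theorem braidPerm_σ (n i : ℕ) : braidPerm n (σ n i) = permOfGen n i :=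
  PresentedGroup.toGroup.of (braidRels_lift n)

/-- The pure braid group `P_n = ker Π`. -/
def PureBraid (n : ℕ) : Subgroup (BraidGroup n) := (braidPerm n).ker

/-- The standard pure braid generator
`A_{ij} = σ_{j-1} ⋯ σ_{i+1} σ_i² σ_{i+1}⁻¹ ⋯ σ_{j-1}⁻¹`. -/
def A (n i : ℕ) : ℕ → BraidGroup n
  | 0 => 1
  | j+1 => if j ≤ i then σ n i ^ 2 else σ n j * A n i j * (σ n j)⁻¹

/-- The group `P_n^j` of pure `j`-braids, generated by `A_{ij}` for `1 ≤ i < j`. -/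
def P (n j : ℕ) : Subgroup (BraidGroup n) :=
  Subgroup.closure ((fun i => A n i j) '' Set.Ico 1 j)

/-- Partial sums `N_1 = n_1, N_2 = n_1+n_2, …, N_k = n_1+⋯+n_k` of a list. -/
def partialSums : List ℕ → List ℕ
  | [] => []
  | a :: l => a :: (partialSums l).map (a + ·)

/-- The permutation braid `π_{n₁…n_k}`: the product `σ_1 σ_2 ⋯ σ_{n-1}` with the
letters `σ_{N_1}, …, σ_{N_{k-1}}` omitted. -/
def piBraid (n : ℕ) (ns : List ℕ) : BraidGroup n :=
  (((List.range n).filter fun i => decide (1 ≤ i ∧ i ∉ partialSums ns)).map (σ n)).prod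

/-- The permutation braid `π_n = σ_1 σ_2 ⋯ σ_{n-1}`. -/
def piN (n : ℕ) : BraidGroup n := piBraid n [n]

/-- A braid is woven of type `(n₁, …, n_k)` if it can be written as
`π_{n₁…n_k} β_{N_1} β_{N_2} ⋯ β_{N_k}` with each `β_{N_i} ∈ P_n^{N_i}`. -/
def IsWovenOfType (n : ℕ) (ns : List ℕ) (w : BraidGroup n) : Prop :=
  ∃ b : ℕ → BraidGroup n,
    (∀ m ∈ partialSums ns, b m ∈ P n m) ∧
    w = piBraid n ns * ((partialSums ns).map b).prod

/-- `W_n^1 = π_n P_n^n`, the set of woven braids of type `(n)`. -/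
def W1 (n : ℕ) : Set (BraidGroup n) := { w | ∃ b ∈ P n n, w = piN n * b }
theorem σ_sq_mem (n i : ℕ) : σ n i ^ 2 ∈ PureBraid n := by
  have h : braidPerm n (σ n i) ^ 2 = 1 := by
    rw [braidPerm_σ]
    unfold permOfGen
    split_ifs
    · rw [sq]; exact Equiv.swap_mul_self _ _
    · simp
  simpa [PureBraid, MonoidHom.mem_ker, map_pow] using h

theorem A_mem_pure (n i j : ℕ) : A n i j ∈ PureBraid n := by
  induction j with
  | zero => exact one_mem _
  | succ j ih =>
    show A n i (j+1) ∈ _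
    rw [A]
    split_ifs
    · exact σ_sq_mem n i
    · simp only [PureBraid, MonoidHom.mem_ker, map_mul, map_inv] at ih ⊢
      simp [ih]

/-- The generator `A_{ij}` as an element of the pure braid group `P_n`. -/
def Agen (n i j : ℕ) : ↥(PureBraid n) := ⟨A n i j, A_mem_pure n i j⟩

/-- `f` is the homomorphism `∇ : P_n → P_n` of the paper, determined by
`∇(A_{1j}) = 1` and `∇(A_{ij}) = A_{i-1,j-1}` for `i ≥ 2`. -/
def IsNabla (n : ℕ) (f : ↥(PureBraid n) →* ↥(PureBraid n)) : Prop :=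
  (∀ j, 1 < j → j ≤ n → f (Agen n 1 j) = 1) ∧
  (∀ i j, 2 ≤ i → i < j → j ≤ n → f (Agen n i j) = Agen n (i-1) (j-1))

/-- Conjugation by `π_n` as a homomorphism `P_n → P_n`, `α ↦ π_n α π_n⁻¹`. -/
def conjPiHom (n : ℕ) : ↥(PureBraid n) →* ↥(PureBraid n) where
  toFun α := ⟨piN n * ↑α * (piN n)⁻¹,
    Subgroup.Normal.conj_mem (MonoidHom.normal_ker _) ↑α α.2 (piN n)⟩
  map_one' := by ext; simp
  map_mul' a b := by ext; push_cast; group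

/-- The product `β ∇(β) ∇²(β) ⋯ ∇^{m-1}(β)`. -/
def weave (n : ℕ) (f : ↥(PureBraid n) →* ↥(PureBraid n)) (m : ℕ)
    (β : ↥(PureBraid n)) : ↥(PureBraid n) :=
  ((List.range m).map fun t => (⇑f)^[t] β).prod

/-- The set `K_n = { β ∇(β) ∇²(β) ⋯ ∇^{n-2}(β) : β ∈ P_n^n }`. -/
def Kset (n : ℕ) (f : ↥(PureBraid n) →* ↥(PureBraid n)) : Set ↥(PureBraid n) :=
  { k | ∃ β : ↥(PureBraid n), (β : BraidGroup n) ∈ P n n ∧ k = weave n f (n-1) β }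


namespace Braid

theorem mk_rel {n : ℕ} {r : FreeGroup ℕ} (h : r ∈ braidRels n) :
    PresentedGroup.mk (braidRels n) r = 1 :=
  (QuotientGroup.eq_one_iff r).mpr (Subgroup.subset_normalClosure h)

theorem s_one {n i : ℕ} (h : i = 0 ∨ n ≤ i) : σ n i = 1 :=
  mk_rel (Or.inr (Or.inr ⟨i, h, rfl⟩))

theorem braid {n : ℕ} {i : ℕ} (h1 : 1 ≤ i) (h2 : i + 2 ≤ n) :
    σ n i * σ n (i+1) * σ n i = σ n (i+1) * σ n i * σ n (i+1) := by
  have := mk_rel (n := n) (Or.inl ⟨i, h1, h2, rfl⟩)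
  simp only [map_mul, map_inv] at this
  rw [mul_inv_eq_one] at this
  exact this

theorem comm {n : ℕ} {i j : ℕ} (h : i + 2 ≤ j) : Commute (σ n i) (σ n j) := by
  rcases Nat.eq_zero_or_pos i with rfl | hi
  · rw [s_one (Or.inl rfl)]; exact Commute.one_left _
  rcases le_or_gt n j with hj | hj
  · rw [s_one (n := n) (Or.inr hj)]; exact Commute.one_right _
  · have := mk_rel (n := n) (Or.inr (Or.inl ⟨i, j, hi, h, hj, rfl⟩))
    simp only [map_mul, map_inv] at this
    rw [mul_inv_eq_one] at this
    exact this

/-- `σ_t σ_{t+1}² σ_t⁻¹ = σ_{t+1}⁻¹ σ_t² σ_{t+1}`. -/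
theorem sq_conj {n t : ℕ} (h1 : 1 ≤ t) (h2 : t + 2 ≤ n) :
    σ n t * σ n (t+1) ^ 2 * (σ n t)⁻¹ = (σ n (t+1))⁻¹ * σ n t ^ 2 * σ n (t+1) := by
  have hb := braid h1 h2
  apply mul_left_cancel (a := σ n (t+1))
  rw [sq, sq]
  calc σ n (t+1) * (σ n t * (σ n (t+1) * σ n (t+1)) * (σ n t)⁻¹)
      = (σ n (t+1) * σ n t * σ n (t+1)) * (σ n (t+1) * (σ n t)⁻¹) := by group
    _ = (σ n t * σ n (t+1) * σ n t) * (σ n (t+1) * (σ n t)⁻¹) := by rw [← hb]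
    _ = σ n t * ((σ n (t+1) * σ n t * σ n (t+1)) * (σ n t)⁻¹) := by group
    _ = σ n t * ((σ n t * σ n (t+1) * σ n t) * (σ n t)⁻¹) := by rw [← hb]
    _ = σ n (t+1) * ((σ n (t+1))⁻¹ * (σ n t * σ n t) * σ n (t+1)) := by group

/-- `σ_t (σ_{t+1} σ_t² σ_{t+1}⁻¹) σ_t⁻¹ = σ_{t+1}²`. -/
theorem sq_conj2 {n t : ℕ} (h1 : 1 ≤ t) (h2 : t + 2 ≤ n) :
    σ n t * (σ n (t+1) * σ n t ^ 2 * (σ n (t+1))⁻¹) * (σ n t)⁻¹ = σ n (t+1) ^ 2 := by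
  have hb := braid h1 h2
  rw [sq, sq]
  calc σ n t * (σ n (t+1) * (σ n t * σ n t) * (σ n (t+1))⁻¹) * (σ n t)⁻¹
      = (σ n t * σ n (t+1) * σ n t) * (σ n t * (σ n (t+1))⁻¹ * (σ n t)⁻¹) := by group
    _ = (σ n (t+1) * σ n t * σ n (t+1)) * (σ n t * (σ n (t+1))⁻¹ * (σ n t)⁻¹) := by rw [hb]
    _ = σ n (t+1) * ((σ n t * σ n (t+1) * σ n t) * ((σ n (t+1))⁻¹ * (σ n t)⁻¹)) := by group
    _ = σ n (t+1) * ((σ n (t+1) * σ n t * σ n (t+1)) * ((σ n (t+1))⁻¹ * (σ n t)⁻¹)) := by rw [hb]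
    _ = σ n (t+1) * σ n (t+1) := by group

end Braid


namespace Braid

theorem commute_of_conj {G : Type*} [Group G] {a b : G} (h : a * b * a⁻¹ = b) :
    Commute a b := mul_inv_eq_iff_eq_mul.mp h

theorem conj_eq_self {G : Type*} [Group G] {a b : G} (h : Commute a b) :
    a * b * a⁻¹ = b := mul_inv_eq_iff_eq_mul.mpr h.eq

theorem conj_conj {G : Type*} [Group G] {a b : G} (h : Commute a b) (x : G) :
    a * (b * x * b⁻¹) * a⁻¹ = b * (a * x * a⁻¹) * b⁻¹ := by
  have e : a * (b * x * b⁻¹) * a⁻¹ = (a * b) * x * (a * b)⁻¹ := by group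
  rw [e, h.eq]
  group

theorem A_zero (n i : ℕ) : A n i 0 = 1 := rfl

theorem A_base (n i : ℕ) : A n i (i+1) = σ n i ^ 2 := by
  show A n i (i+1) = _
  rw [A, if_pos le_rfl]

theorem A_succ {n i j : ℕ} (h : i < j) : A n i (j+1) = σ n j * A n i j * (σ n j)⁻¹ := by
  rw [A, if_neg (by omega)]

/-- σ_t commutes with A_{ij} when t = 0 or t ≤ i-2. -/
theorem commA_low {n t i : ℕ} (h : t = 0 ∨ t + 2 ≤ i) (j : ℕ) :
    Commute (σ n t) (A n i j) := by
  have hcs : Commute (σ n t) (σ n i) := by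
    rcases h with rfl | h
    · rw [s_one (Or.inl rfl)]; exact Commute.one_left _
    · exact comm h
  induction j with
  | zero => rw [A_zero]; exact Commute.one_right _
  | succ j ih =>
    rw [A]
    split_ifs with hji
    · exact hcs.pow_right 2
    · have hcj : Commute (σ n t) (σ n j) := by
        rcases h with rfl | h
        · rw [s_one (Or.inl rfl)]; exact Commute.one_left _
        · exact comm (by omega)
      exact (hcj.mul_right ih).mul_right hcj.inv_right

/-- σ_t commutes with A_{ij} when t ≥ j+1 (and i < j). -/
theorem commA_high {n t i j : ℕ} (hij : i < j) (h : j + 1 ≤ t) :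
    Commute (σ n t) (A n i j) := by
  induction j with
  | zero => exact absurd hij (by omega)
  | succ j ih =>
    rw [A]
    split_ifs with hji
    · have : i = j := by omega
      subst this
      exact ((comm (show i + 2 ≤ t by omega)).symm.pow_right 2)
    · exact ((comm (by omega)).symm.mul_right (ih (by omega) (by omega))).mul_right
        (comm (by omega)).symm.inv_right

/-- σ_t commutes with A_{ij} when i+1 ≤ t ≤ j-2. -/
theorem commA_mid {n t i j : ℕ} (hi1 : 1 ≤ i) (hit : i + 1 ≤ t) (htj : t + 2 ≤ j) :
    j ≤ n → Commute (σ n t) (A n i j) := by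
  induction j with
  | zero => omega
  | succ j ih =>
    intro hn
    rcases Nat.lt_or_ge (t+2) (j+1) with hlt | hge
    · rw [A_succ (by omega)]
      have hcj : Commute (σ n t) (σ n j) := comm (by omega)
      exact (hcj.mul_right (ih (by omega) (by omega))).mul_right hcj.inv_right
    · have hj : j = t + 1 := by omega
      subst hj
      rw [A_succ (by omega), A_succ (by omega)]
      have hb := braid (show 1 ≤ t by omega) (show t + 2 ≤ n by omega)
      have hA : σ n (t+1) * A n i t * (σ n (t+1))⁻¹ = A n i t :=
        conj_eq_self (commA_high (by omega) (by omega))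
      apply commute_of_conj
      calc σ n t * (σ n (t+1) * (σ n t * A n i t * (σ n t)⁻¹) * (σ n (t+1))⁻¹) * (σ n t)⁻¹
          = (σ n t * σ n (t+1) * σ n t) * A n i t * (σ n t * σ n (t+1) * σ n t)⁻¹ := by
            group
        _ = (σ n (t+1) * σ n t * σ n (t+1)) * A n i t *
              (σ n (t+1) * σ n t * σ n (t+1))⁻¹ := by rw [hb]
        _ = σ n (t+1) * (σ n t * (σ n (t+1) * A n i t * (σ n (t+1))⁻¹) * (σ n t)⁻¹) *
              (σ n (t+1))⁻¹ := by group
        _ = σ n (t+1) * (σ n t * A n i t * (σ n t)⁻¹) * (σ n (t+1))⁻¹ := by rw [hA]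

/-- σ_i A_{ij} σ_i⁻¹ = A_{i+1,j} for i+1 < j ≤ n. -/
theorem move {n i j : ℕ} (h1 : 1 ≤ i) (h2 : i + 2 ≤ j) :
    j ≤ n → σ n i * A n i j * (σ n i)⁻¹ = A n (i+1) j := by
  induction j with
  | zero => omega
  | succ j ih =>
    intro hn
    rcases Nat.lt_or_ge (i+2) (j+1) with hlt | hge
    · rw [A_succ (show i < j by omega), A_succ (show i + 1 < j by omega)]
      have hc := comm (n := n) (show i + 2 ≤ j by omega)
      calc σ n i * (σ n j * A n i j * (σ n j)⁻¹) * (σ n i)⁻¹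
          = σ n j * (σ n i * A n i j * (σ n i)⁻¹) * (σ n j)⁻¹ := by
            exact conj_conj hc _
        _ = σ n j * A n (i+1) j * (σ n j)⁻¹ := by rw [ih (by omega) (by omega)]
    · have hj : j = i + 1 := by omega
      subst hj
      have e1 : A n i (i+2) = σ n (i+1) * A n i (i+1) * (σ n (i+1))⁻¹ := A_succ (by omega)
      have e2 : A n (i+1) (i+2) = σ n (i+1) ^ 2 := A_base n (i+1)
      rw [e1, e2, A_base]
      exact sq_conj2 h1 (by omega)

/-- σ_i A_{i+1,j} σ_i⁻¹ = A_{i+1,j}⁻¹ A_{ij} A_{i+1,j} for i+1 < j ≤ n. -/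
theorem lowfwd {n i j : ℕ} (h1 : 1 ≤ i) (h2 : i + 2 ≤ j) :
    j ≤ n → σ n i * A n (i+1) j * (σ n i)⁻¹ = (A n (i+1) j)⁻¹ * A n i j * A n (i+1) j := by
  induction j with
  | zero => omega
  | succ j ih =>
    intro hn
    rcases Nat.lt_or_ge (i+2) (j+1) with hlt | hge
    · rw [A_succ (show i + 1 < j by omega), A_succ (show i < j by omega)]
      have hc := comm (n := n) (show i + 2 ≤ j by omega)
      calc σ n i * (σ n j * A n (i+1) j * (σ n j)⁻¹) * (σ n i)⁻¹
          = σ n j * (σ n i * A n (i+1) j * (σ n i)⁻¹) * (σ n j)⁻¹ := by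
            exact conj_conj hc _
        _ = σ n j * ((A n (i+1) j)⁻¹ * A n i j * A n (i+1) j) * (σ n j)⁻¹ := by
            rw [ih (by omega) (by omega)]
        _ = (σ n j * A n (i+1) j * (σ n j)⁻¹)⁻¹ * (σ n j * A n i j * (σ n j)⁻¹) *
              (σ n j * A n (i+1) j * (σ n j)⁻¹) := by group
    · have hj : j = i + 1 := by omega
      subst hj
      have e1 : A n i (i+2) = σ n (i+1) * A n i (i+1) * (σ n (i+1))⁻¹ := A_succ (by omega)
      have e2 : A n (i+1) (i+2) = σ n (i+1) ^ 2 := A_base n (i+1)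
      rw [e1, e2, A_base]
      have h := sq_conj (n := n) (t := i) h1 (by omega)
      calc σ n i * σ n (i+1) ^ 2 * (σ n i)⁻¹
          = (σ n (i+1))⁻¹ * σ n i ^ 2 * σ n (i+1) := h
        _ = (σ n (i+1) ^ 2)⁻¹ * (σ n (i+1) * σ n i ^ 2 * (σ n (i+1))⁻¹) * σ n (i+1) ^ 2 := by
            group

end Braid


namespace Braid

theorem conj_conj_inv {G : Type*} [Group G] {a b : G} (h : Commute a b) (x : G) :
    a * (b⁻¹ * x * b) * a⁻¹ = b⁻¹ * (a * x * a⁻¹) * b := by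
  have e : a * (b⁻¹ * x * b) * a⁻¹ = (a * b⁻¹) * x * (a * b⁻¹)⁻¹ := by group
  rw [e, h.inv_right.eq]
  group

/-- The ascending chain `σ_1 σ_2 ⋯ σ_b`. -/
def asc (n : ℕ) : ℕ → BraidGroup n
  | 0 => 1
  | b+1 => asc n b * σ n (b+1)

theorem asc_succ (n b : ℕ) : asc n (b+1) = asc n b * σ n (b+1) := rfl

theorem comm_asc {n x : ℕ} (e : ℕ) (h : e + 2 ≤ x) : Commute (σ n x) (asc n e) := by
  induction e with
  | zero => exact Commute.one_right _
  | succ e ih =>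
    rw [asc_succ]
    exact (ih (by omega)).mul_right (comm (by omega)).symm

theorem pure_conj {n : ℕ} {x : BraidGroup n} (hx : x ∈ PureBraid n) (g : BraidGroup n) :
    g * x * g⁻¹ ∈ PureBraid n :=
  (MonoidHom.normal_ker _).conj_mem x hx g

theorem pure_conj' {n : ℕ} {x : BraidGroup n} (hx : x ∈ PureBraid n) (g : BraidGroup n) :
    g⁻¹ * x * g ∈ PureBraid n := by
  have := pure_conj hx g⁻¹
  rwa [inv_inv] at this

theorem piN_eq {n : ℕ} (hn : 1 ≤ n) : piN n = asc n (n-1) := by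
  have hasc : ∀ b, ((List.range' 1 b).map (σ n)).prod = asc n b := by
    intro b
    induction b with
    | zero => rfl
    | succ b ih =>
      rw [List.range'_concat, List.map_append, List.prod_append, ih, asc_succ]
      simp [Nat.add_comm 1 b]
  have hrange : List.range n = 0 :: List.range' 1 (n-1) := by
    rw [List.range_eq_range']
    have : n = (n-1) + 1 := by omega
    rw [this, List.range'_succ]
    simp
  have hfilter : (List.range n).filter
      (fun i => decide (1 ≤ i ∧ i ∉ partialSums [n])) = List.range' 1 (n-1) := by
    rw [hrange, List.filter_cons]
    have h0 : ¬ (decide (1 ≤ 0 ∧ 0 ∉ partialSums [n]) = true) := by simp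
    rw [if_neg h0, List.filter_eq_self]
    intro a ha
    rw [List.mem_range'_1] at ha
    show decide (1 ≤ a ∧ a ∉ partialSums [n]) = true
    have hps : partialSums [n] = [n] := rfl
    rw [hps]
    simp only [decide_eq_true_eq, List.mem_singleton]
    omega
  rw [piN, piBraid, hfilter, hasc]

theorem Ushift {n : ℕ} : ∀ b m : ℕ, m + 2 ≤ b → b + 1 ≤ n →
    asc n b * σ n (m+1) = σ n (m+2) * asc n b := by
  intro b
  induction b with
  | zero => omega
  | succ b ih =>
    intro m hm hn
    rcases Nat.lt_or_ge (m+2) (b+1) with hlt | hge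
    · have hc := comm (n := n) (show (m+1) + 2 ≤ b+1 by omega)
      calc asc n b * σ n (b+1) * σ n (m+1)
          = asc n b * (σ n (m+1) * σ n (b+1)) := by rw [mul_assoc, ← hc.eq]
        _ = (asc n b * σ n (m+1)) * σ n (b+1) := by group
        _ = σ n (m+2) * asc n b * σ n (b+1) := by rw [ih m (by omega) (by omega)]
        _ = σ n (m+2) * asc n (b+1) := by rw [asc_succ]; group
    · have hb : b = m + 1 := by omega
      subst hb
      rw [asc_succ, asc_succ]
      have hbr := braid (show 1 ≤ m+1 by omega) (show (m+1) + 2 ≤ n by omega)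
      have hc := comm_asc (n := n) (x := m+2) m (by omega)
      calc asc n m * σ n (m+1) * σ n (m+2) * σ n (m+1)
          = asc n m * (σ n (m+1) * σ n (m+2) * σ n (m+1)) := by group
        _ = asc n m * (σ n (m+2) * σ n (m+1) * σ n (m+2)) := by rw [hbr]
        _ = (asc n m * σ n (m+2)) * (σ n (m+1) * σ n (m+2)) := by group
        _ = (σ n (m+2) * asc n m) * (σ n (m+1) * σ n (m+2)) := by rw [← hc.eq]
        _ = σ n (m+2) * (asc n m * σ n (m+1) * σ n (m+2)) := by group

theorem pi_shift {n t : ℕ} (h1 : 1 ≤ t) (h2 : t + 2 ≤ n) :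
    piN n * σ n t * (piN n)⁻¹ = σ n (t+1) := by
  have hb : t = (t-1) + 1 := by omega
  have h := Ushift (n := n) (n-1) (t-1) (by omega) (by omega)
  rw [← hb, show t - 1 + 2 = t + 1 by omega] at h
  rw [piN_eq (by omega), h]
  group

theorem A_shift {n i : ℕ} (h1 : 1 ≤ i) : ∀ j, i < j → j + 1 ≤ n →
    piN n * A n i j * (piN n)⁻¹ = A n (i+1) (j+1) := by
  intro j
  induction j with
  | zero => omega
  | succ j ih =>
    intro hij hn
    rcases Nat.lt_or_ge i j with hlt | hge
    · rw [A_succ (show i < j by omega), A_succ (show i + 1 < j + 1 by omega)]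
      have hs := pi_shift (show 1 ≤ j by omega) (show j + 2 ≤ n by omega)
      calc piN n * (σ n j * A n i j * (σ n j)⁻¹) * (piN n)⁻¹
          = (piN n * σ n j * (piN n)⁻¹) * (piN n * A n i j * (piN n)⁻¹) *
            (piN n * σ n j * (piN n)⁻¹)⁻¹ := by group
        _ = σ n (j+1) * A n (i+1) (j+1) * (σ n (j+1))⁻¹ := by
            rw [hs, ih (by omega) (by omega)]
    · have hj : j = i := by omega
      subst hj
      have e1 : A n j (j+1) = σ n j ^ 2 := A_base n j
      have e2 : A n (j+1) (j+2) = σ n (j+1) ^ 2 := A_base n (j+1)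
      rw [e1, e2]
      have hs := pi_shift (show 1 ≤ j by omega) (show j + 2 ≤ n by omega)
      calc piN n * σ n j ^ 2 * (piN n)⁻¹
          = (piN n * σ n j * (piN n)⁻¹) * (piN n * σ n j * (piN n)⁻¹) := by
            rw [sq]; group
        _ = σ n (j+1) ^ 2 := by rw [hs, sq]

theorem Rlem {n : ℕ} : ∀ m, m + 2 ≤ n → ∃ e ∈ PureBraid n,
    asc n m * σ n (m+1) ^ 2 * (asc n m)⁻¹ = e⁻¹ * A n 1 (m+2) * e := by
  intro m
  induction m with
  | zero =>
    intro h
    refine ⟨1, one_mem _, ?_⟩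
    have e1 : A n 1 2 = σ n 1 ^ 2 := A_base n 1
    rw [e1]
    show 1 * σ n 1 ^ 2 * 1⁻¹ = 1⁻¹ * σ n 1 ^ 2 * 1
    group
  | succ m ih =>
    intro h
    obtain ⟨e, he, heq⟩ := ih (by omega)
    have hsq := sq_conj (n := n) (t := m+1) (by omega) (by omega)
    have hc : Commute (asc n m) (σ n (m+2)) := (comm_asc (n := n) m (by omega)).symm
    have hA : A n 1 (m+3) = σ n (m+2) * A n 1 (m+2) * (σ n (m+2))⁻¹ :=
      A_succ (show (1:ℕ) < m+2 by omega)
    refine ⟨σ n (m+2) ^ 2 * ((σ n (m+2))⁻¹ * e * σ n (m+2)), mul_mem (σ_sq_mem n (m+2))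
      (pure_conj' he _), ?_⟩
    show asc n (m+1) * σ n (m+2) ^ 2 * (asc n (m+1))⁻¹ = _
    rw [asc_succ]
    calc asc n m * σ n (m+1) * σ n (m+2) ^ 2 * (asc n m * σ n (m+1))⁻¹
        = asc n m * (σ n (m+1) * σ n (m+2) ^ 2 * (σ n (m+1))⁻¹) * (asc n m)⁻¹ := by group
      _ = asc n m * ((σ n (m+2))⁻¹ * σ n (m+1) ^ 2 * σ n (m+2)) * (asc n m)⁻¹ := by rw [hsq]
      _ = (σ n (m+2))⁻¹ * (asc n m * σ n (m+1) ^ 2 * (asc n m)⁻¹) * σ n (m+2) :=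
          conj_conj_inv hc _
      _ = (σ n (m+2))⁻¹ * (e⁻¹ * A n 1 (m+2) * e) * σ n (m+2) := by rw [heq]
      _ = (σ n (m+2) ^ 2 * ((σ n (m+2))⁻¹ * e * σ n (m+2)))⁻¹ * A n 1 (m+3) *
            (σ n (m+2) ^ 2 * ((σ n (m+2))⁻¹ * e * σ n (m+2))) := by rw [hA]; group

theorem PconjAin {n : ℕ} (hn : 2 ≤ n) : ∀ d i : ℕ, 1 ≤ i → i + d = n - 1 →
    ∃ e ∈ PureBraid n, piN n * A n i n * (piN n)⁻¹ = e⁻¹ * A n 1 (i+1) * e := by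
  intro d
  induction d with
  | zero =>
    intro i h1 hd
    have hi : i = n - 1 := by omega
    subst hi
    obtain ⟨e, he, heq⟩ := Rlem (n := n) (n-2) (by omega)
    refine ⟨e, he, ?_⟩
    have hbase : A n (n-1) n = σ n (n-1) ^ 2 := by
      have := A_base n (n-1)
      rwa [show n - 1 + 1 = n by omega] at this
    have hpi : piN n = asc n (n-2) * σ n (n-1) := by
      rw [piN_eq (by omega), show n - 1 = (n-2) + 1 by omega, asc_succ]
    rw [show n - 2 + 1 = n - 1 by omega, show n - 2 + 2 = n by omega] at heq
    rw [show n - 1 + 1 = n by omega, hbase, hpi, ← heq]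
    group
  | succ d ih =>
    intro i h1 hd
    obtain ⟨e, he, heq⟩ := ih (i+1) (by omega) (by omega)
    have hmove : σ n i * A n i n * (σ n i)⁻¹ = A n (i+1) n :=
      move h1 (by omega) le_rfl
    have hAin : A n i n = (σ n i)⁻¹ * A n (i+1) n * σ n i := by
      rw [← hmove]; group
    have hs := pi_shift (show 1 ≤ i by omega) (show i + 2 ≤ n by omega)
    have hsinv : piN n * (σ n i)⁻¹ * (piN n)⁻¹ = (σ n (i+1))⁻¹ := by
      rw [← hs]; group
    have hAd : A n 1 (i+2) = σ n (i+1) * A n 1 (i+1) * (σ n (i+1))⁻¹ :=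
      A_succ (show (1:ℕ) < i + 1 by omega)
    refine ⟨(σ n (i+1))⁻¹ * e * σ n (i+1), pure_conj' he _, ?_⟩
    rw [hAin]
    calc piN n * ((σ n i)⁻¹ * A n (i+1) n * σ n i) * (piN n)⁻¹
        = (piN n * (σ n i)⁻¹ * (piN n)⁻¹) * (piN n * A n (i+1) n * (piN n)⁻¹) *
          (piN n * σ n i * (piN n)⁻¹) := by group
      _ = (σ n (i+1))⁻¹ * (e⁻¹ * A n 1 (i+2) * e) * σ n (i+1) := by
          rw [hsinv, heq, hs]
      _ = ((σ n (i+1))⁻¹ * e * σ n (i+1))⁻¹ * A n 1 (i+1) *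
            ((σ n (i+1))⁻¹ * e * σ n (i+1)) := by
          rw [hAd]; group

end Braid


namespace Braid

/-- The set of squares of in-range generators. -/
def sqSet (n : ℕ) : Set (BraidGroup n) := {x | ∃ i, 1 ≤ i ∧ i + 1 ≤ n ∧ x = σ n i ^ 2}

/-- The normal closure of the squares of the generators. -/
def Nc (n : ℕ) : Subgroup (BraidGroup n) := Subgroup.normalClosure (sqSet n)

instance Nc_normal (n : ℕ) : (Nc n).Normal := Subgroup.normalClosure_normal

theorem Nc_le_pure (n : ℕ) : Nc n ≤ PureBraid n := by
  haveI : (PureBraid n).Normal := MonoidHom.normal_ker _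
  apply Subgroup.normalClosure_le_normal
  rintro x ⟨i, -, -, rfl⟩
  exact σ_sq_mem n i

/-- The Coxeter-type quotient of the braid group. -/
def Cox (n : ℕ) := BraidGroup n ⧸ Nc n

instance (n : ℕ) : Group (Cox n) := QuotientGroup.Quotient.group _

/-- The quotient map. -/
def cq (n : ℕ) : BraidGroup n →* Cox n := QuotientGroup.mk' (Nc n)

theorem cq_surjective (n : ℕ) : Function.Surjective (cq n) :=
  QuotientGroup.mk'_surjective _

/-- The generators of the Coxeter quotient. -/
def g (n t : ℕ) : Cox n := cq n (σ n t)

theorem g_mul_self {n t : ℕ} : g n t * g n t = 1 := by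
  by_cases h : 1 ≤ t ∧ t + 1 ≤ n
  · have hmem : σ n t ^ 2 ∈ Nc n :=
      Subgroup.subset_normalClosure ⟨t, h.1, h.2, rfl⟩
    have : cq n (σ n t ^ 2) = 1 := (QuotientGroup.eq_one_iff _).mpr hmem
    rw [← this, sq, map_mul]
    rfl
  · have : σ n t = 1 := s_one (by omega)
    simp [g, this]

theorem g_inv {n t : ℕ} : (g n t)⁻¹ = g n t :=
  inv_eq_of_mul_eq_one_right g_mul_self

theorem g_braid {n t : ℕ} (h1 : 1 ≤ t) (h2 : t + 2 ≤ n) :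
    g n t * g n (t+1) * g n t = g n (t+1) * g n t * g n (t+1) := by
  show cq n _ * cq n _ * cq n _ = cq n _ * cq n _ * cq n _
  rw [← map_mul, ← map_mul, ← map_mul, ← map_mul, braid h1 h2]

theorem g_comm {n i j : ℕ} (h : i + 2 ≤ j) : Commute (g n i) (g n j) :=
  (comm h).map (cq n)

/-- The descending product `g_{k-1} g_{k-2} ⋯ g_m`. -/
def D (n : ℕ) : ℕ → ℕ → Cox n
  | 0, _ => 1
  | k+1, m => if k < m then 1 else g n k * D n k m

theorem D_eq_one {n k m : ℕ} (h : k ≤ m) : D n k m = 1 := by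
  cases k with
  | zero => rfl
  | succ k => exact if_pos (by omega)

theorem D_succ {n k m : ℕ} (h : m ≤ k) : D n (k+1) m = g n k * D n k m :=
  if_neg (by omega)

theorem D_peel {n m : ℕ} : ∀ k, m + 1 ≤ k → D n k m = D n k (m+1) * g n m := by
  intro k hk
  induction k, hk using Nat.le_induction with
  | base =>
    rw [D_succ le_rfl, D_eq_one le_rfl, D_eq_one le_rfl, one_mul, mul_one]
  | succ k hk ih =>
    rw [D_succ (by omega), D_succ (by omega), ih, mul_assoc]

theorem commD_low {n t m : ℕ} (h : t + 2 ≤ m) : ∀ k, Commute (g n t) (D n k m) := by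
  intro k
  induction k with
  | zero => exact Commute.one_right _
  | succ k ih =>
    show Commute _ (if k < m then 1 else g n k * D n k m)
    split_ifs with hkm
    · exact Commute.one_right _
    · exact (g_comm (by omega)).mul_right ih

theorem commD_high {n t m : ℕ} : ∀ k, k + 1 ≤ t → Commute (g n t) (D n k m) := by
  intro k
  induction k with
  | zero => intro _; exact Commute.one_right _
  | succ k ih =>
    intro ht
    show Commute _ (if k < m then 1 else g n k * D n k m)
    split_ifs with hkm
    · exact Commute.one_right _
    · exact (g_comm (show k + 2 ≤ t by omega)).symm.mul_right (ih (by omega))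

theorem D_slide {n m u : ℕ} (hm1 : 1 ≤ m) (hmu : m ≤ u) :
    ∀ k, u + 2 ≤ k → k ≤ n → D n k m * g n (u+1) = g n u * D n k m := by
  intro k hk
  induction k, hk using Nat.le_induction with
  | base =>
    intro hn
    rw [D_succ (by omega), D_succ (by omega)]
    have hcomm : Commute (g n (u+1)) (D n u m) := commD_high u le_rfl
    have hbr := g_braid (show 1 ≤ u by omega) (show u + 2 ≤ n by omega)
    calc g n (u+1) * (g n u * D n u m) * g n (u+1)
        = (g n (u+1) * g n u) * (D n u m * g n (u+1)) := by group
      _ = (g n (u+1) * g n u) * (g n (u+1) * D n u m) := by rw [← hcomm.eq]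
      _ = (g n (u+1) * g n u * g n (u+1)) * D n u m := by group
      _ = (g n u * g n (u+1) * g n u) * D n u m := by rw [← hbr]
      _ = g n u * (g n (u+1) * (g n u * D n u m)) := by group
  | succ k hk ih =>
    intro hn
    rw [D_succ (by omega), mul_assoc, ih (by omega), ← mul_assoc, ← mul_assoc,
      ← (g_comm (show u + 2 ≤ k by omega)).eq]

/-- The staircase product `ST d k = D_2 D_3 ⋯ D_k` with `D_l = D l (d l)`. -/
def ST (n : ℕ) (d : ℕ → ℕ) : ℕ → Cox n
  | 0 => 1
  | k+1 => ST n d k * D n (k+1) (d (k+1))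

/-- Valid staircase data. -/
def ValidD (d : ℕ → ℕ) : Prop := ∀ k, 1 ≤ d k ∧ d k ≤ max 1 k

theorem ST_congr {n : ℕ} {d d' : ℕ → ℕ} : ∀ k, (∀ l, l ≤ k → d l = d' l) →
    ST n d k = ST n d' k := by
  intro k
  induction k with
  | zero => intro _; rfl
  | succ k ih =>
    intro h
    show ST n d k * D n (k+1) (d (k+1)) = ST n d' k * D n (k+1) (d' (k+1))
    rw [ih (fun l hl => h l (by omega)), h (k+1) le_rfl]

theorem ST_triv {n : ℕ} : ∀ k, ST n (fun l => max 1 l) k = 1 := by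
  intro k
  induction k with
  | zero => rfl
  | succ k ih =>
    show ST n _ k * D n (k+1) (max 1 (k+1)) = 1
    rw [ih, show max 1 (k+1) = k + 1 by omega, D_eq_one le_rfl, one_mul]

theorem push {n : ℕ} : ∀ k (d : ℕ → ℕ), ValidD d → ∀ t, 1 ≤ t → t + 1 ≤ k → k ≤ n →
    ∃ d', ValidD d' ∧ ST n d' k = ST n d k * g n t := by
  intro k
  induction k with
  | zero => omega
  | succ k ih =>
    intro d hd t ht1 htk hkn
    set m := d (k+1) with hm
    have hm1 : 1 ≤ m := (hd (k+1)).1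
    have hmk : m ≤ k + 1 := by have := (hd (k+1)).2; omega
    have hST : ST n d (k+1) = ST n d k * D n (k+1) m := rfl
    by_cases hc1 : t + 2 ≤ m
    · -- commute through, recurse with t
      obtain ⟨d'', hd'', heq⟩ := ih d hd t ht1 (by omega) (by omega)
      refine ⟨Function.update d'' (k+1) m, ?_, ?_⟩
      · intro l
        by_cases hl : l = k + 1
        · subst hl; rw [Function.update_self]; exact ⟨hm1, by omega⟩
        · rw [Function.update_of_ne hl]; exact hd'' l
      · show ST n _ k * D n (k+1) (Function.update d'' (k+1) m (k+1)) = _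
        rw [Function.update_self,
          ST_congr k (fun l hl => Function.update_of_ne (by omega) _ _), heq,
          hST, mul_assoc, mul_assoc, (commD_low hc1 (k+1)).eq]
    · by_cases hc2 : t + 1 = m
      · -- t = m - 1 : extend the stair downwards
        refine ⟨Function.update d (k+1) t, ?_, ?_⟩
        · intro l
          by_cases hl : l = k + 1
          · subst hl; rw [Function.update_self]; exact ⟨ht1, by omega⟩
          · rw [Function.update_of_ne hl]; exact hd l
        · show ST n _ k * D n (k+1) (Function.update d (k+1) t (k+1)) = _
          rw [Function.update_self,
            ST_congr k (fun l hl => Function.update_of_ne (by omega) _ _), hST,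
            mul_assoc]
          congr 1
          rw [show D n (k+1) t = D n (k+1) (t+1) * g n t from D_peel (k+1) (by omega), hc2]
      · by_cases hc3 : t = m
        · -- t = m : shorten the stair
          refine ⟨Function.update d (k+1) (m+1), ?_, ?_⟩
          · intro l
            by_cases hl : l = k + 1
            · subst hl; rw [Function.update_self]
              refine ⟨by omega, by omega⟩
            · rw [Function.update_of_ne hl]; exact hd l
          · show ST n _ k * D n (k+1) (Function.update d (k+1) (m+1) (k+1)) = _
            rw [Function.update_self,
              ST_congr k (fun l hl => Function.update_of_ne (by omega) _ _), hST,
              mul_assoc]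
            congr 1
            rw [show D n (k+1) m = D n (k+1) (m+1) * g n m from D_peel (k+1) (by omega),
              hc3, mul_assoc, g_mul_self, mul_one]
        · -- t ≥ m + 1 : slide
          have htm : m + 1 ≤ t := by omega
          have hslide : D n (k+1) m * g n t = g n (t-1) * D n (k+1) m := by
            have := D_slide (n := n) hm1 (show m ≤ t - 1 by omega) (k+1)
              (by omega) (by omega)
            rwa [show t - 1 + 1 = t by omega] at this
          obtain ⟨d'', hd'', heq⟩ := ih d hd (t-1) (by omega) (by omega) (by omega)
          refine ⟨Function.update d'' (k+1) m, ?_, ?_⟩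
          · intro l
            by_cases hl : l = k + 1
            · subst hl; rw [Function.update_self]; exact ⟨hm1, by omega⟩
            · rw [Function.update_of_ne hl]; exact hd'' l
          · show ST n _ k * D n (k+1) (Function.update d'' (k+1) m (k+1)) = _
            rw [Function.update_self,
              ST_congr k (fun l hl => Function.update_of_ne (by omega) _ _), heq,
              hST, mul_assoc, mul_assoc, ← hslide]

theorem cox_surj {n : ℕ} (hn : 1 ≤ n) :
    ∀ x : Cox n, ∃ d, ValidD d ∧ x = ST n d n := by
  intro x
  obtain ⟨y, rfl⟩ := cq_surjective n x
  have hy : y ∈ Subgroup.closure (Set.range (σ n)) := by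
    have : Set.range (σ n) = Set.range (PresentedGroup.of (rels := braidRels n)) := rfl
    rw [this, PresentedGroup.closure_range_of]
    trivial
  induction hy using Subgroup.closure_induction_right with
  | one =>
    exact ⟨fun l => max 1 l, fun k => ⟨le_max_left _ _, le_rfl⟩, (ST_triv n).symm⟩
  | mul_right x hx u hu ih =>
    obtain ⟨d, hd, heq⟩ := ih
    obtain ⟨t, rfl⟩ := hu
    rw [map_mul]
    by_cases hrange : 1 ≤ t ∧ t + 1 ≤ n
    · obtain ⟨d', hd', heq'⟩ := push n d hd t hrange.1 (by omega) le_rfl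
      exact ⟨d', hd', by rw [heq', ← heq]; rfl⟩
    · have : σ n t = 1 := s_one (by omega)
      rw [show cq n (σ n t) = 1 by rw [this, map_one], mul_one]
      exact ⟨d, hd, heq⟩
  | mul_inv_cancel x hx u hu ih =>
    obtain ⟨d, hd, heq⟩ := ih
    obtain ⟨t, rfl⟩ := hu
    rw [map_mul, map_inv]
    rw [show (cq n (σ n t))⁻¹ = g n t from g_inv]
    by_cases hrange : 1 ≤ t ∧ t + 1 ≤ n
    · obtain ⟨d', hd', heq'⟩ := push n d hd t hrange.1 (by omega) le_rfl
      exact ⟨d', hd', by rw [heq', ← heq]⟩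
    · have : σ n t = 1 := s_one (by omega)
      rw [show g n t = 1 by rw [g, this, map_one], mul_one]
      exact ⟨d, hd, heq⟩

/-- The permutation homomorphism on the Coxeter quotient. -/
def permQ (n : ℕ) : Cox n →* Equiv.Perm ℕ :=
  QuotientGroup.lift (Nc n) (braidPerm n) (fun x hx => Nc_le_pure n hx)

theorem permQ_cq {n : ℕ} (x : BraidGroup n) : permQ n (cq n x) = braidPerm n x := rfl

theorem permQ_g {n t : ℕ} : permQ n (g n t) = permOfGen n t := by
  rw [g, permQ_cq, braidPerm_σ]

theorem permOfGen_fix {n t x : ℕ} (h1 : x ≠ t) (h2 : x ≠ t + 1) : permOfGen n t x = x := by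
  unfold permOfGen
  split_ifs
  · exact Equiv.swap_apply_of_ne_of_ne h1 h2
  · rfl

theorem permD_fix {n m x : ℕ} : ∀ k, (x < m ∨ k < x) → permQ n (D n k m) x = x := by
  intro k
  induction k with
  | zero => intro _; rw [show D n 0 m = (1 : Cox n) from rfl, map_one]; rfl
  | succ k ih =>
    intro h
    show permQ n (if k < m then 1 else g n k * D n k m) x = x
    split_ifs with hkm
    · rw [map_one]; rfl
    · rw [map_mul, Equiv.Perm.mul_apply, ih (by omega), permQ_g,
        permOfGen_fix (by omega) (by omega)]

theorem permD_send {n m : ℕ} (hm1 : 1 ≤ m) : ∀ k, m ≤ k → k ≤ n →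
    permQ n (D n k m) m = k := by
  intro k hk
  induction k, hk using Nat.le_induction with
  | base => intro _; rw [D_eq_one le_rfl, map_one]; rfl
  | succ k hk ih =>
    intro hn
    rw [D_succ (by omega), map_mul, Equiv.Perm.mul_apply, ih (by omega), permQ_g]
    have : permOfGen n k = Equiv.swap k (k+1) := if_pos ⟨by omega, by omega⟩
    rw [this, Equiv.swap_apply_left]

theorem permST_fix {n : ℕ} {d : ℕ → ℕ} (hd : ValidD d) :
    ∀ k x, k < x → permQ n (ST n d k) x = x := by
  intro k
  induction k with
  | zero => intro x _; rw [show ST n d 0 = (1 : Cox n) from rfl, map_one]; rfl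
  | succ k ih =>
    intro x hx
    show permQ n (ST n d k * D n (k+1) (d (k+1))) x = x
    rw [map_mul, Equiv.Perm.mul_apply, permD_fix (k+1) (Or.inr (by omega)),
      ih x (by omega)]

theorem ST_eq_one {n : ℕ} : ∀ k, k ≤ n → ∀ d : ℕ → ℕ, ValidD d →
    permQ n (ST n d k) = 1 → ST n d k = 1 := by
  intro k
  induction k with
  | zero => intro _ d _ _; rfl
  | succ k ih =>
    intro hkn d hd h
    set m := d (k+1) with hm
    have hm1 : 1 ≤ m := (hd (k+1)).1
    have hmk : m ≤ k + 1 := by have := (hd (k+1)).2; omega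
    have hval : permQ n (ST n d (k+1)) m = m := by rw [h]; rfl
    have hval2 : permQ n (ST n d (k+1)) m = k + 1 := by
      show permQ n (ST n d k * D n (k+1) m) m = k + 1
      rw [map_mul, Equiv.Perm.mul_apply, permD_send hm1 (k+1) hmk (by omega),
        permST_fix hd k (k+1) (by omega)]
    have hmval : m = k + 1 := by rw [← hval, hval2]
    have hD1 : D n (k+1) m = 1 := by rw [hmval]; exact D_eq_one le_rfl
    have hST : ST n d (k+1) = ST n d k := by
      show ST n d k * D n (k+1) m = ST n d k
      rw [hD1, mul_one]
    rw [hST] at h ⊢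
    exact ih (by omega) d hd h

/-- Key generation theorem: every pure braid lies in the normal closure of the
squares of the generators. -/
theorem pure_le_Nc {n : ℕ} (hn : 1 ≤ n) : PureBraid n ≤ Nc n := by
  intro x hx
  obtain ⟨d, hd, heq⟩ := cox_surj hn (cq n x)
  have hperm : permQ n (cq n x) = 1 := by
    rw [permQ_cq]
    exact hx
  rw [heq] at hperm
  have := ST_eq_one n le_rfl d hd hperm
  rw [← heq] at this
  exact (QuotientGroup.eq_one_iff x).mp this

end Braid


namespace Braid

theorem conj_eq_self_inv {G : Type*} [Group G] {a b : G} (h : Commute a b) :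
    a⁻¹ * b * a = b := by
  have := conj_eq_self h.inv_left
  rwa [inv_inv] at this

/-- Derived conjugation: `σ_i⁻¹ A_{ij} σ_i = A_{ij} A_{i+1,j} A_{ij}⁻¹`. -/
theorem move_bwd {n i j : ℕ} (h1 : 1 ≤ i) (h2 : i + 2 ≤ j) (hn : j ≤ n) :
    (σ n i)⁻¹ * A n i j * σ n i = A n i j * A n (i+1) j * (A n i j)⁻¹ := by
  have hm := move h1 h2 hn
  have hl := lowfwd h1 h2 hn
  calc (σ n i)⁻¹ * A n i j * σ n i
      = (σ n i)⁻¹ * (A n (i+1) j * (σ n i * A n (i+1) j * (σ n i)⁻¹) * (A n (i+1) j)⁻¹) *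
          σ n i := by rw [hl]; group
    _ = ((σ n i)⁻¹ * A n (i+1) j * σ n i) * A n (i+1) j *
          ((σ n i)⁻¹ * A n (i+1) j * σ n i)⁻¹ := by group
    _ = A n i j * A n (i+1) j * (A n i j)⁻¹ := by
        rw [show (σ n i)⁻¹ * A n (i+1) j * σ n i = A n i j by rw [← hm]; group]

/-- The set of all standard pure braid generators. -/
def Aset (n : ℕ) : Set (BraidGroup n) :=
  {x | ∃ i j, 1 ≤ i ∧ i < j ∧ j ≤ n ∧ x = A n i j}

/-- The subgroup generated by all `A_{ij}`. -/
def Pall (n : ℕ) : Subgroup (BraidGroup n) := Subgroup.closure (Aset n)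

theorem Aset_conj_fwd {n t : ℕ} {x : BraidGroup n} (hx : x ∈ Aset n) :
    σ n t * x * (σ n t)⁻¹ ∈ Pall n := by
  obtain ⟨i, j, hi1, hij, hjn, rfl⟩ := hx
  have hmemA : ∀ i' j', 1 ≤ i' → i' < j' → j' ≤ n → A n i' j' ∈ Pall n := fun i' j' a b c =>
    Subgroup.subset_closure ⟨i', j', a, b, c, rfl⟩
  by_cases h0 : t = 0 ∨ n ≤ t
  · rw [s_one h0]
    simpa using hmemA i j hi1 hij hjn
  push_neg at h0
  have ht1 : 1 ≤ t := by omega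
  have htn : t + 1 ≤ n := by omega
  by_cases hA : t + 2 ≤ i
  · rw [conj_eq_self (commA_low (Or.inr hA) j)]
    exact hmemA i j hi1 hij hjn
  by_cases hB : t + 1 = i
  · subst hB
    rw [lowfwd ht1 (by omega) hjn]
    exact mul_mem (mul_mem (inv_mem (hmemA _ _ (by omega) hij hjn))
      (hmemA _ _ ht1 (by omega) hjn)) (hmemA _ _ (by omega) hij hjn)
  by_cases hC : t = i
  · subst hC
    by_cases hCj : j = t + 1
    · subst hCj
      rw [A_base, conj_eq_self ((Commute.refl (σ n t)).pow_right 2), ← A_base]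
      exact hmemA t (t+1) ht1 (by omega) hjn
    · rw [move ht1 (by omega) hjn]
      exact hmemA _ _ (by omega) (by omega) hjn
  by_cases hD : t + 2 ≤ j
  · rw [conj_eq_self (commA_mid hi1 (by omega) hD hjn)]
    exact hmemA i j hi1 hij hjn
  by_cases hE : t + 1 = j
  · subst hE
    have hAj : A n i (t+1) = σ n t * A n i t * (σ n t)⁻¹ := A_succ (by omega)
    rw [hAj, show σ n t * (σ n t * A n i t * (σ n t)⁻¹) * (σ n t)⁻¹
      = (σ n t ^ 2) * A n i t * (σ n t ^ 2)⁻¹ by rw [sq]; group, ← A_base]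
    exact mul_mem (mul_mem (hmemA t (t+1) ht1 (by omega) hjn)
      (hmemA i t hi1 (by omega) (by omega))) (inv_mem (hmemA t (t+1) ht1 (by omega) hjn))
  by_cases hF : t = j
  · subst hF
    rw [← A_succ hij]
    exact hmemA _ _ hi1 (by omega) (by omega)
  · rw [conj_eq_self (commA_high hij (by omega))]
    exact hmemA i j hi1 hij hjn

theorem Aset_conj_bwd {n t : ℕ} {x : BraidGroup n} (hx : x ∈ Aset n) :
    (σ n t)⁻¹ * x * σ n t ∈ Pall n := by
  obtain ⟨i, j, hi1, hij, hjn, rfl⟩ := hx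
  have hmemA : ∀ i' j', 1 ≤ i' → i' < j' → j' ≤ n → A n i' j' ∈ Pall n := fun i' j' a b c =>
    Subgroup.subset_closure ⟨i', j', a, b, c, rfl⟩
  by_cases h0 : t = 0 ∨ n ≤ t
  · rw [s_one h0]
    simpa using hmemA i j hi1 hij hjn
  push_neg at h0
  have ht1 : 1 ≤ t := by omega
  have htn : t + 1 ≤ n := by omega
  by_cases hA : t + 2 ≤ i
  · rw [conj_eq_self_inv (commA_low (Or.inr hA) j)]
    exact hmemA i j hi1 hij hjn
  by_cases hB : t + 1 = i
  · subst hB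
    rw [show (σ n t)⁻¹ * A n (t+1) j * σ n t = A n t j by
      rw [← move ht1 (by omega) hjn]; group]
    exact hmemA _ _ ht1 (by omega) hjn
  by_cases hC : t = i
  · subst hC
    by_cases hCj : j = t + 1
    · subst hCj
      rw [A_base, conj_eq_self_inv ((Commute.refl (σ n t)).pow_right 2), ← A_base]
      exact hmemA t (t+1) ht1 (by omega) hjn
    · rw [move_bwd ht1 (by omega) hjn]
      exact mul_mem (mul_mem (hmemA _ _ ht1 hij hjn)
        (hmemA _ _ (by omega) (by omega) hjn)) (inv_mem (hmemA _ _ ht1 hij hjn))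
  by_cases hD : t + 2 ≤ j
  · rw [conj_eq_self_inv (commA_mid hi1 (by omega) hD hjn)]
    exact hmemA i j hi1 hij hjn
  by_cases hE : t + 1 = j
  · subst hE
    have hAj : A n i (t+1) = σ n t * A n i t * (σ n t)⁻¹ := A_succ (by omega)
    rw [hAj, show (σ n t)⁻¹ * (σ n t * A n i t * (σ n t)⁻¹) * σ n t = A n i t by group]
    exact hmemA i t hi1 (by omega) (by omega)
  by_cases hF : t = j
  · subst hF
    rw [show (σ n t)⁻¹ * A n i t * σ n t
        = (σ n t ^ 2)⁻¹ * (σ n t * A n i t * (σ n t)⁻¹) * σ n t ^ 2 by rw [sq]; group,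
      ← A_succ hij, ← A_base]
    exact mul_mem (mul_mem (inv_mem (hmemA t (t+1) ht1 (by omega) (by omega)))
      (hmemA i (t+1) hi1 (by omega) (by omega))) (hmemA t (t+1) ht1 (by omega) (by omega))
  · rw [conj_eq_self_inv (commA_high hij (by omega))]
    exact hmemA i j hi1 hij hjn

theorem Pall_conj_fwd {n t : ℕ} : ∀ y ∈ Pall n, σ n t * y * (σ n t)⁻¹ ∈ Pall n := by
  intro y hy
  induction hy using Subgroup.closure_induction with
  | mem x hx => exact Aset_conj_fwd hx
  | one => simpa using one_mem (Pall n)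
  | mul x y hx hy ihx ihy =>
    have : σ n t * (x * y) * (σ n t)⁻¹
        = (σ n t * x * (σ n t)⁻¹) * (σ n t * y * (σ n t)⁻¹) := by group
    rw [this]; exact mul_mem ihx ihy
  | inv x hx ihx =>
    have : σ n t * x⁻¹ * (σ n t)⁻¹ = (σ n t * x * (σ n t)⁻¹)⁻¹ := by group
    rw [this]; exact inv_mem ihx

theorem Pall_conj_bwd {n t : ℕ} : ∀ y ∈ Pall n, (σ n t)⁻¹ * y * σ n t ∈ Pall n := by
  intro y hy
  induction hy using Subgroup.closure_induction with
  | mem x hx => exact Aset_conj_bwd hx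
  | one => simpa using one_mem (Pall n)
  | mul x y hx hy ihx ihy =>
    have : (σ n t)⁻¹ * (x * y) * σ n t
        = ((σ n t)⁻¹ * x * σ n t) * ((σ n t)⁻¹ * y * σ n t) := by group
    rw [this]; exact mul_mem ihx ihy
  | inv x hx ihx =>
    have : (σ n t)⁻¹ * x⁻¹ * σ n t = ((σ n t)⁻¹ * x * σ n t)⁻¹ := by group
    rw [this]; exact inv_mem ihx

instance Pall_normal (n : ℕ) : (Pall n).Normal := by
  rw [← Subgroup.normalizer_eq_top_iff]
  rw [eq_top_iff]
  intro x _
  refine PresentedGroup.generated_by (braidRels n) _ (fun t => ?_) x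
  rw [Subgroup.mem_normalizer_iff]
  intro y
  constructor
  · intro hy
    exact Pall_conj_fwd y hy
  · intro hy
    have h2 := Pall_conj_bwd (n := n) (t := t) _ hy
    rwa [show (σ n t)⁻¹ * (PresentedGroup.of t * y * (PresentedGroup.of t)⁻¹) * σ n t = y
      from by show (σ n t)⁻¹ * (σ n t * y * (σ n t)⁻¹) * σ n t = y; group] at h2

theorem pure_le_Pall {n : ℕ} (hn : 1 ≤ n) : PureBraid n ≤ Pall n := by
  refine le_trans (pure_le_Nc hn) (Subgroup.normalClosure_le_normal ?_)
  rintro x ⟨i, hi1, hin, rfl⟩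
  rw [← A_base]
  exact Subgroup.subset_closure ⟨i, i+1, hi1, by omega, by omega, rfl⟩

/-! Conjugation into `P n n`. -/

theorem Pnn_gen_mem {n i : ℕ} (h1 : 1 ≤ i) (h2 : i < n) : A n i n ∈ P n n :=
  Subgroup.subset_closure ⟨i, ⟨h1, h2⟩, rfl⟩

theorem Pnn_gen_conj_fwd {n t i : ℕ} (ht1 : 1 ≤ t) (ht2 : t + 2 ≤ n)
    (hi1 : 1 ≤ i) (hin : i < n) : σ n t * A n i n * (σ n t)⁻¹ ∈ P n n := by
  by_cases hA : t + 2 ≤ i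
  · rw [conj_eq_self (commA_low (Or.inr hA) n)]
    exact Pnn_gen_mem hi1 hin
  by_cases hB : t + 1 = i
  · subst hB
    rw [lowfwd ht1 (by omega) le_rfl]
    exact mul_mem (mul_mem (inv_mem (Pnn_gen_mem (by omega) hin))
      (Pnn_gen_mem ht1 (by omega))) (Pnn_gen_mem (by omega) hin)
  by_cases hC : t = i
  · subst hC
    rw [move ht1 (by omega) le_rfl]
    exact Pnn_gen_mem (by omega) (by omega)
  · rw [conj_eq_self (commA_mid hi1 (by omega) (by omega) le_rfl)]
    exact Pnn_gen_mem hi1 hin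

theorem Pnn_gen_conj_bwd {n t i : ℕ} (ht1 : 1 ≤ t) (ht2 : t + 2 ≤ n)
    (hi1 : 1 ≤ i) (hin : i < n) : (σ n t)⁻¹ * A n i n * σ n t ∈ P n n := by
  by_cases hA : t + 2 ≤ i
  · rw [conj_eq_self_inv (commA_low (Or.inr hA) n)]
    exact Pnn_gen_mem hi1 hin
  by_cases hB : t + 1 = i
  · subst hB
    rw [show (σ n t)⁻¹ * A n (t+1) n * σ n t = A n t n by
      rw [← move ht1 (by omega) le_rfl]; group]
    exact Pnn_gen_mem ht1 (by omega)
  by_cases hC : t = i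
  · subst hC
    rw [move_bwd ht1 (by omega) le_rfl]
    exact mul_mem (mul_mem (Pnn_gen_mem ht1 hin)
      (Pnn_gen_mem (by omega) (by omega))) (inv_mem (Pnn_gen_mem ht1 hin))
  · rw [conj_eq_self_inv (commA_mid hi1 (by omega) (by omega) le_rfl)]
    exact Pnn_gen_mem hi1 hin

theorem Pnn_conj_fwd {n t : ℕ} (ht1 : 1 ≤ t) (ht2 : t + 2 ≤ n) :
    ∀ y ∈ P n n, σ n t * y * (σ n t)⁻¹ ∈ P n n := by
  intro y hy
  induction hy using Subgroup.closure_induction with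
  | mem x hx =>
    obtain ⟨i, hi, rfl⟩ := hx
    exact Pnn_gen_conj_fwd ht1 ht2 hi.1 hi.2
  | one => simpa using one_mem (P n n)
  | mul x y hx hy ihx ihy =>
    have : σ n t * (x * y) * (σ n t)⁻¹
        = (σ n t * x * (σ n t)⁻¹) * (σ n t * y * (σ n t)⁻¹) := by group
    rw [this]; exact mul_mem ihx ihy
  | inv x hx ihx =>
    have : σ n t * x⁻¹ * (σ n t)⁻¹ = (σ n t * x * (σ n t)⁻¹)⁻¹ := by group
    rw [this]; exact inv_mem ihx

theorem Pnn_conj_bwd {n t : ℕ} (ht1 : 1 ≤ t) (ht2 : t + 2 ≤ n) :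
    ∀ y ∈ P n n, (σ n t)⁻¹ * y * σ n t ∈ P n n := by
  intro y hy
  induction hy using Subgroup.closure_induction with
  | mem x hx =>
    obtain ⟨i, hi, rfl⟩ := hx
    exact Pnn_gen_conj_bwd ht1 ht2 hi.1 hi.2
  | one => simpa using one_mem (P n n)
  | mul x y hx hy ihx ihy =>
    have : (σ n t)⁻¹ * (x * y) * σ n t
        = ((σ n t)⁻¹ * x * σ n t) * ((σ n t)⁻¹ * y * σ n t) := by group
    rw [this]; exact mul_mem ihx ihy
  | inv x hx ihx =>
    have : (σ n t)⁻¹ * x⁻¹ * σ n t = ((σ n t)⁻¹ * x * σ n t)⁻¹ := by group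
    rw [this]; exact inv_mem ihx

theorem sigma_mem_normalizer {n t : ℕ} (ht1 : 1 ≤ t) (ht2 : t + 2 ≤ n) :
    σ n t ∈ Subgroup.normalizer (P n n : Set (BraidGroup n)) := by
  rw [Subgroup.mem_normalizer_iff]
  intro y
  constructor
  · exact Pnn_conj_fwd ht1 ht2 y
  · intro hy
    have := Pnn_conj_bwd ht1 ht2 _ hy
    rwa [show (σ n t)⁻¹ * (σ n t * y * (σ n t)⁻¹) * σ n t = y by group] at this

/-- The subgroup generated by `σ_1, …, σ_{n-2}`. -/
def Msub (n : ℕ) : Subgroup (BraidGroup n) :=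
  Subgroup.closure {x | ∃ t, 1 ≤ t ∧ t + 2 ≤ n ∧ x = σ n t}

theorem M_le_normalizer (n : ℕ) : Msub n ≤ Subgroup.normalizer (P n n : Set (BraidGroup n)) := by
  rw [Msub, Subgroup.closure_le]
  rintro x ⟨t, ht1, ht2, rfl⟩
  exact sigma_mem_normalizer ht1 ht2

theorem A_mem_M {n i : ℕ} (h1 : 1 ≤ i) : ∀ j, i < j → j + 1 ≤ n → A n i j ∈ Msub n := by
  intro j
  induction j with
  | zero => omega
  | succ j ih =>
    intro hij hn
    have hs : ∀ t, 1 ≤ t → t + 2 ≤ n → σ n t ∈ Msub n := fun t a b =>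
      Subgroup.subset_closure ⟨t, a, b, rfl⟩
    rcases Nat.lt_or_ge i j with hlt | hge
    · rw [A_succ hlt]
      exact mul_mem (mul_mem (hs j (by omega) (by omega)) (ih hlt (by omega)))
        (inv_mem (hs j (by omega) (by omega)))
    · have hji : A n i (j+1) = σ n i ^ 2 := by
        rw [show j + 1 = i + 1 by omega]
        exact A_base n i
      rw [hji, sq]
      exact mul_mem (hs i h1 (by omega)) (hs i h1 (by omega))

/-- The set of generators `A_{ij}` with `j ≤ n - 1`. -/
def Hset (n : ℕ) : Set (BraidGroup n) :=
  {x | ∃ i j, 1 ≤ i ∧ i < j ∧ j + 1 ≤ n ∧ x = A n i j}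

/-- The subgroup generated by the `A_{ij}` with `j ≤ n - 1`. -/
def Hsub (n : ℕ) : Subgroup (BraidGroup n) := Subgroup.closure (Hset n)

theorem H_le_normalizer (n : ℕ) : Hsub n ≤ Subgroup.normalizer (P n n : Set (BraidGroup n)) := by
  rw [Hsub, Subgroup.closure_le]
  rintro x ⟨i, j, hi1, hij, hjn, rfl⟩
  exact M_le_normalizer n (A_mem_M hi1 j hij hjn)

theorem Pnn_le_pure (n : ℕ) : P n n ≤ PureBraid n := by
  rw [P, Subgroup.closure_le]
  rintro x ⟨i, hi, rfl⟩
  exact A_mem_pure n i n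

theorem Hsub_le_pure (n : ℕ) : Hsub n ≤ PureBraid n := by
  rw [Hsub, Subgroup.closure_le]
  rintro x ⟨i, j, hi1, hij, hjn, rfl⟩
  exact A_mem_pure n i j

/-- Artin combing (coarse form): every pure braid is a product of an element of
`P_n^n` and an element generated by the `A_{ij}`, `j < n`. -/
theorem pure_decomp {n : ℕ} (hn : 1 ≤ n) {x : BraidGroup n} (hx : x ∈ PureBraid n) :
    ∃ p ∈ P n n, ∃ h ∈ Hsub n, x = p * h := by
  have hx' : x ∈ Pall n := pure_le_Pall hn hx
  clear hx
  induction hx' using Subgroup.closure_induction with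
  | mem y hy =>
    obtain ⟨i, j, hi1, hij, hjn, rfl⟩ := hy
    by_cases hjn' : j = n
    · refine ⟨A n i j, ?_, 1, one_mem _, (mul_one _).symm⟩
      rw [hjn'] at hij ⊢
      exact Pnn_gen_mem hi1 hij
    · exact ⟨1, one_mem _, A n i j, Subgroup.subset_closure ⟨i, j, hi1, hij, by omega, rfl⟩,
        (one_mul _).symm⟩
  | one => exact ⟨1, one_mem _, 1, one_mem _, (mul_one 1).symm⟩
  | mul x y hx hy ihx ihy =>
    obtain ⟨p1, hp1, h1, hh1, rfl⟩ := ihx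
    obtain ⟨p2, hp2, h2, hh2, rfl⟩ := ihy
    refine ⟨p1 * (h1 * p2 * h1⁻¹), ?_, h1 * h2, mul_mem hh1 hh2, by group⟩
    exact mul_mem hp1 ((Subgroup.mem_normalizer_iff.mp (H_le_normalizer n hh1) p2).mp hp2)
  | inv x hx ihx =>
    obtain ⟨p, hp, h, hh, rfl⟩ := ihx
    refine ⟨h⁻¹ * p⁻¹ * (h⁻¹)⁻¹, ?_, h⁻¹, inv_mem hh, by group⟩
    exact (Subgroup.mem_normalizer_iff.mp (H_le_normalizer n (inv_mem hh)) p⁻¹).mp (inv_mem hp)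

end Braid


namespace Braid

theorem mem_closure_subtype {G : Type*} [Group G] {K : Subgroup G} {S : Set G}
    (hS : S ⊆ K) {x : G} (hx : x ∈ Subgroup.closure S) :
    ∀ hxK : x ∈ K, (⟨x, hxK⟩ : K) ∈ Subgroup.closure {y : K | (y : G) ∈ S} := by
  induction hx using Subgroup.closure_induction with
  | mem y hy => exact fun hyK => Subgroup.subset_closure hy
  | one =>
    intro h
    have : (⟨(1 : G), h⟩ : K) = 1 := Subtype.ext rfl
    rw [this]; exact one_mem _
  | mul a b ha hb iha ihb =>
    intro h
    have hKa : a ∈ K := (Subgroup.closure_le K).mpr hS ha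
    have hKb : b ∈ K := (Subgroup.closure_le K).mpr hS hb
    have : (⟨a * b, h⟩ : K) = ⟨a, hKa⟩ * ⟨b, hKb⟩ := Subtype.ext rfl
    rw [this]; exact mul_mem (iha hKa) (ihb hKb)
  | inv a ha iha =>
    intro h
    have hKa : a ∈ K := (Subgroup.closure_le K).mpr hS ha
    have : (⟨a⁻¹, h⟩ : K) = (⟨a, hKa⟩)⁻¹ := Subtype.ext rfl
    rw [this]; exact inv_mem (iha hKa)

end Braid

theorem ker_Phi_eq' (n : ℕ) (hn : 2 ≤ n)
    (nabla : ↥(PureBraid n) →* ↥(PureBraid n)) (hnabla : IsNabla n nabla) :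
    MonoidHom.ker (nabla.comp (conjPiHom n)) = (P n n).subgroupOf (PureBraid n) ∧
    W1 n = { w | ∃ b : ↥(PureBraid n),
      b ∈ MonoidHom.ker (nabla.comp (conjPiHom n)) ∧ w = piN n * ↑b } := by
  set Φ := nabla.comp (conjPiHom n) with hΦ
  -- Φ kills the generators A_{i,n}
  have phi_n : ∀ i, 1 ≤ i → i < n → Φ (Agen n i n) = 1 := by
    intro i hi1 hin
    obtain ⟨e, he, heq⟩ := Braid.PconjAin hn (n - 1 - i) i hi1 (by omega)
    have hconj : conjPiHom n (Agen n i n)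
        = (⟨e, he⟩ : ↥(PureBraid n))⁻¹ * Agen n 1 (i+1) * ⟨e, he⟩ := by
      apply Subtype.ext
      show piN n * A n i n * (piN n)⁻¹ = e⁻¹ * A n 1 (i+1) * e
      exact heq
    rw [hΦ, MonoidHom.comp_apply, hconj, map_mul, map_mul, map_inv,
      hnabla.1 (i+1) (by omega) (by omega)]
    group
  -- Φ fixes the generators A_{i,j}, j ≤ n-1
  have phi_H : ∀ i j, 1 ≤ i → i < j → j + 1 ≤ n → Φ (Agen n i j) = Agen n i j := by
    intro i j hi1 hij hjn
    have hconj : conjPiHom n (Agen n i j) = Agen n (i+1) (j+1) := by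
      apply Subtype.ext
      show piN n * A n i j * (piN n)⁻¹ = A n (i+1) (j+1)
      exact Braid.A_shift hi1 j hij (by omega)
    rw [hΦ, MonoidHom.comp_apply, hconj,
      hnabla.2 (i+1) (j+1) (by omega) (by omega) (by omega)]
    congr 1 <;> omega
  -- Φ vanishes on (lifts of) P n n
  have hker_of_Pnn : ∀ b : ↥(PureBraid n), (b : BraidGroup n) ∈ P n n → Φ b = 1 := by
    intro b hb
    have hS : ((fun i => A n i n) '' Set.Ico 1 n) ⊆ (PureBraid n : Set (BraidGroup n)) := by
      rintro x ⟨i, hi, rfl⟩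
      exact A_mem_pure n i n
    have hmem := Braid.mem_closure_subtype hS hb b.2
    have hb' : (⟨(b : BraidGroup n), b.2⟩ : ↥(PureBraid n)) = b := Subtype.ext rfl
    rw [hb'] at hmem
    have hle : Subgroup.closure {y : ↥(PureBraid n) |
        (y : BraidGroup n) ∈ (fun i => A n i n) '' Set.Ico 1 n} ≤ Φ.ker := by
      rw [Subgroup.closure_le]
      rintro y ⟨i, hi, hyi⟩
      have hy : y = Agen n i n := Subtype.ext hyi.symm
      rw [SetLike.mem_coe, MonoidHom.mem_ker, hy]
      exact phi_n i hi.1 hi.2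
    exact MonoidHom.mem_ker.mp (hle hmem)
  -- Φ is the identity on (lifts of) Hsub n
  have hH_eq : ∀ b : ↥(PureBraid n), (b : BraidGroup n) ∈ Braid.Hsub n → Φ b = b := by
    intro b hb
    have hS : Braid.Hset n ⊆ (PureBraid n : Set (BraidGroup n)) := by
      rintro x ⟨i, j, hi1, hij, hjn, rfl⟩
      exact A_mem_pure n i j
    have hmem := Braid.mem_closure_subtype hS hb b.2
    have hb' : (⟨(b : BraidGroup n), b.2⟩ : ↥(PureBraid n)) = b := Subtype.ext rfl
    rw [hb'] at hmem
    have heqon : Set.EqOn ⇑Φ ⇑(MonoidHom.id ↥(PureBraid n))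
        {y : ↥(PureBraid n) | (y : BraidGroup n) ∈ Braid.Hset n} := by
      rintro y ⟨i, j, hi1, hij, hjn, hyi⟩
      have hy : y = Agen n i j := Subtype.ext hyi
      show Φ y = y
      rw [hy]
      exact phi_H i j hi1 hij hjn
    exact MonoidHom.eqOn_closure heqon hmem
  have hker : MonoidHom.ker Φ = (P n n).subgroupOf (PureBraid n) := by
    ext b
    constructor
    · intro hb
      rw [MonoidHom.mem_ker] at hb
      obtain ⟨p, hp, h, hh, hdecomp⟩ := Braid.pure_decomp (by omega) b.2
      have hp' : p ∈ PureBraid n := Braid.Pnn_le_pure n hp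
      have hh' : h ∈ PureBraid n := Braid.Hsub_le_pure n hh
      have hbeq : b = (⟨p, hp'⟩ : ↥(PureBraid n)) * ⟨h, hh'⟩ := Subtype.ext hdecomp
      have h1 : Φ b = ⟨h, hh'⟩ := by
        rw [hbeq, map_mul, hker_of_Pnn ⟨p, hp'⟩ hp, hH_eq ⟨h, hh'⟩ hh, one_mul]
      have h2 : (⟨h, hh'⟩ : ↥(PureBraid n)) = 1 := by rw [← h1, hb]
      have h3 : h = 1 := congrArg Subtype.val h2
      rw [Subgroup.mem_subgroupOf]
      have : (b : BraidGroup n) = p := by rw [hdecomp, h3, mul_one]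
      rw [this]
      exact hp
    · intro hb
      rw [Subgroup.mem_subgroupOf] at hb
      rw [MonoidHom.mem_ker]
      exact hker_of_Pnn b hb
  refine ⟨hker, ?_⟩
  ext w
  constructor
  · rintro ⟨b, hb, rfl⟩
    refine ⟨⟨b, Braid.Pnn_le_pure n hb⟩, ?_, rfl⟩
    rw [hker, Subgroup.mem_subgroupOf]
    exact hb
  · rintro ⟨b, hb, rfl⟩
    rw [hker, Subgroup.mem_subgroupOf] at hb
    exact ⟨b, hb, rfl⟩

theorem ker_Phi_eq (n : ℕ) (hn : 2 ≤ n)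
    (nabla : ↥(PureBraid n) →* ↥(PureBraid n)) (hnabla : IsNabla n nabla) :
    MonoidHom.ker (nabla.comp (conjPiHom n)) = (P n n).subgroupOf (PureBraid n) ∧
    W1 n = { w | ∃ b : ↥(PureBraid n),
      b ∈ MonoidHom.ker (nabla.comp (conjPiHom n)) ∧ w = piN n * ↑b } :=
  ker_Phi_eq' n hn nabla hnabla
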